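/- Let Γ be a finite Abelian group whose order is congruent to 1 modulo 3. Suppose the set Γ \ {0} admits a partition S_1, …, S_t into sets of size 3 such that ∑_{s∈S_i} s = 0 for every i. Then there exists a complete mapping φ of Γ that fixes the identity element (φ(0) = 0) and permutes the remaining elements as a product of disjoint 3-cycles, i.e., φ(φ(φ(x))) = x for all x ∈ Γ and φ(x) ≠ x for all x ≠ 0. -/

import Mathlib

open Classical in
theorem stmt13 {Γ : Type*} [AddCommGroup Γ] [Fintype Γ]
    (hcard : Fintype.card Γ % 3 = 1)
    (t : ℕ) (S : Fin t → Finset Γ)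
    (hpart : ∀ g : Γ, g ≠ 0 → ∃! i, g ∈ S i)
    (hzero : ∀ i, (0 : Γ) ∉ S i)
    (hsize : ∀ i, (S i).card = 3)
    (hsum : ∀ i, ∑ s ∈ S i, s = 0) :
    ∃ φ : Γ → Γ, Function.Bijective φ ∧
      Function.Bijective (fun x : Γ => x + φ x) ∧
      φ 0 = 0 ∧ (∀ x : Γ, φ (φ (φ x)) = x) ∧ (∀ x : Γ, x ≠ 0 → φ x ≠ x) := by
  classical
  -- index of a nonzero element
  set idx : ∀ x : Γ, x ≠ 0 → Fin t := fun x hx => (hpart x hx).choose with hidx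
  have hmemidx : ∀ (x : Γ) (hx : x ≠ 0), x ∈ S (idx x hx) := fun x hx =>
    (hpart x hx).choose_spec.1
  have huniq : ∀ (x : Γ) (hx : x ≠ 0) (i : Fin t), x ∈ S i → i = idx x hx := fun x hx i hi =>
    (hpart x hx).choose_spec.2 i hi
  set φ : Γ → Γ := fun x =>
    if hx : x = 0 then 0 else List.formPerm ((S (idx x hx)).toList) x with hφ
  have hnodup : ∀ i, ((S i).toList).Nodup := fun i => (S i).nodup_toList
  have hlen : ∀ i, ((S i).toList).length = 3 := fun i => by
    rw [Finset.length_toList, hsize]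
  have hmemlist : ∀ (x : Γ) (i : Fin t), x ∈ (S i).toList ↔ x ∈ S i := fun x i =>
    Finset.mem_toList
  -- φ of a nonzero element stays in the same block
  have hφmem : ∀ (x : Γ) (hx : x ≠ 0), φ x ∈ S (idx x hx) := by
    intro x hx
    rw [hφ]; simp only [dif_neg hx]
    rw [← hmemlist]
    exact List.formPerm_apply_mem_of_mem ((hmemlist x _).2 (hmemidx x hx))
  have hφne0 : ∀ (x : Γ) (hx : x ≠ 0), φ x ≠ 0 := by
    intro x hx h0
    exact hzero _ (h0 ▸ hφmem x hx)
  -- φ x ≠ x for x ≠ 0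
  have hne : ∀ (x : Γ) (hx : x ≠ 0), φ x ≠ x := by
    intro x hx
    rw [hφ]; simp only [dif_neg hx]
    refine (List.formPerm_apply_mem_ne_self_iff _ (hnodup _) x
      ((hmemlist x _).2 (hmemidx x hx))).2 ?_
    rw [hlen]; norm_num
  -- applying φ again uses the same list
  have hφstep : ∀ (x : Γ) (hx : x ≠ 0),
      φ (φ x) = List.formPerm ((S (idx x hx)).toList) (φ x) := by
    intro x hx
    have h1 : φ x ≠ 0 := hφne0 x hx
    have : idx (φ x) h1 = idx x hx := (huniq (φ x) h1 _ (hφmem x hx)).symm ▸ rfl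
    rw [hφ]; simp only [dif_neg h1]
    exact (show φ (φ x) = List.formPerm ((S (idx (φ x) h1)).toList) (φ x) from dif_neg h1).trans (by rw [this])
  have hφval : ∀ (x : Γ) (hx : x ≠ 0),
      φ x = List.formPerm ((S (idx x hx)).toList) x := by
    intro x hx; rw [hφ]; simp only [dif_neg hx]
  -- φ³ = id
  have hcube : ∀ x : Γ, φ (φ (φ x)) = x := by
    intro x
    by_cases hx : x = 0
    · subst hx
      have h0 : φ (0 : Γ) = 0 := by rw [hφ]; simp
      rw [h0, h0, h0]
    · have h1 : φ x ≠ 0 := hφne0 x hx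
      have h2 : φ (φ x) ≠ 0 := hφne0 _ h1
      have e1 := hφval x hx
      have e2 := hφstep x hx
      have e3 : φ (φ (φ x)) = List.formPerm ((S (idx x hx)).toList) (φ (φ x)) := by
        have h2mem : φ (φ x) ∈ S (idx x hx) := by
          rw [e2, ← hmemlist]
          exact List.formPerm_apply_mem_of_mem (by
            rw [hmemlist]; exact hφmem x hx)
        rw [hφ]; simp only [dif_neg h2]
        exact (show φ (φ (φ x)) = List.formPerm ((S (idx (φ (φ x)) h2)).toList) (φ (φ x)) from dif_neg h2).trans (by rw [← huniq (φ (φ x)) h2 _ h2mem])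
      rw [e3, e2, e1]
      have := List.formPerm_pow_length_eq_one_of_nodup _ (hnodup (idx x hx))
      rw [hlen] at this
      have h3 : ∀ y : Γ, (List.formPerm ((S (idx x hx)).toList) ^ 3) y = y := by
        intro y; rw [this]; rfl
      have := h3 x
      simpa [pow_succ, Equiv.Perm.mul_apply] using this
  have hzeroφ : φ 0 = 0 := by rw [hφ]; simp
  -- bijectivity of φ : inverse is φ ∘ φ
  have hbij : Function.Bijective φ := by
    refine Function.bijective_iff_has_inverse.2 ⟨φ ∘ φ, ?_, ?_⟩
    · intro x; simpa using hcube x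
    · intro x; simpa using hcube x
  -- the key sum identity : x + φ x = -(φ (φ x))
  have hkey : ∀ x : Γ, x + φ x = -(φ (φ x)) := by
    intro x
    by_cases hx : x = 0
    · subst hx; simp [hzeroφ]
    · have h1 : φ x ≠ 0 := hφne0 x hx
      have i := idx x hx
      have hxm : x ∈ S (idx x hx) := hmemidx x hx
      have h1m : φ x ∈ S (idx x hx) := hφmem x hx
      have h2m : φ (φ x) ∈ S (idx x hx) := by
        rw [hφstep x hx, ← hmemlist]
        exact List.formPerm_apply_mem_of_mem (by rw [hmemlist]; exact h1m)
      have d1 : φ x ≠ x := hne x hx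
      have d2 : φ (φ x) ≠ φ x := hne (φ x) h1
      have d3 : φ (φ x) ≠ x := by
        intro h
        apply d1
        have h4 : φ (φ (φ x)) = φ x := congrArg φ h
        rw [hcube x] at h4
        exact h4.symm
      -- {x, φ x, φ (φ x)} = S (idx x hx)
      have hsub : ({x, φ x, φ (φ x)} : Finset Γ) ⊆ S (idx x hx) := by
        intro y hy
        simp only [Finset.mem_insert, Finset.mem_singleton] at hy
        rcases hy with rfl | rfl | rfl
        · exact hxm
        · exact h1m
        · exact h2m
      have hcard3 : ({x, φ x, φ (φ x)} : Finset Γ).card = 3 := by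
        rw [Finset.card_insert_of_notMem, Finset.card_insert_of_notMem,
          Finset.card_singleton]
        · simpa using d2.symm
        · simp only [Finset.mem_insert, Finset.mem_singleton]
          push_neg
          exact ⟨d1.symm, d3.symm⟩
      have heq : ({x, φ x, φ (φ x)} : Finset Γ) = S (idx x hx) :=
        Finset.eq_of_subset_of_card_le hsub (by rw [hcard3, hsize])
      have hs : x + φ x + φ (φ x) = 0 := by
        have := hsum (idx x hx)
        rw [← heq] at this
        rw [Finset.sum_insert, Finset.sum_insert, Finset.sum_singleton] at this
        · linear_combination (norm := abel_nf) this
        · simpa using d2.symm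
        · simp only [Finset.mem_insert, Finset.mem_singleton]
          push_neg
          exact ⟨d1.symm, d3.symm⟩
      exact add_eq_zero_iff_eq_neg.mp hs
  refine ⟨φ, hbij, ?_, hzeroφ, hcube, fun x hx => hne x hx⟩
  have : (fun x : Γ => x + φ x) = (fun y => -y) ∘ φ ∘ φ := by
    funext x; simp [hkey x]
  rw [this]
  exact (neg_involutive.bijective).comp (hbij.comp hbij)
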